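/- The helicity ±1 polarization sum for a spin-2 field is: for all indices i, j, m, n, ∑_{h ∈ {+1,−1}} e^{(h)}ᵢⱼ(k̂) · e^{(h)}ₘₙ(−k̂) = k̂ᵢk̂ₘ·πⱼₙ + k̂ⱼk̂ₘ·πᵢₙ + k̂ᵢk̂ₙ·πⱼₘ + k̂ⱼk̂ₙ·πᵢₘ, where πᵢⱼ = δᵢⱼ − k̂ᵢk̂ⱼ. -/

import Mathlib

open Complex

/-- Dot product on `ℝ³` realized as `Fin 3 → ℝ`. -/
noncomputable def dotR (u v : Fin 3 → ℝ) : ℝ := ∑ i, u i * v i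

/-- The complex polarization vectors
`ê^±(k̂)ᵢ = (n̂ᵢ − (n̂·k̂)k̂ᵢ ± i(k̂×n̂)ᵢ)/√(2(1 − (n̂·k̂)²))`,
with the sign `s = ±1` labelling the helicity. -/
noncomputable def polVec (n k : Fin 3 → ℝ) (s : ℝ) : Fin 3 → ℂ := fun i =>
  (((n i - dotR n k * k i : ℝ) : ℂ) +
      (s : ℂ) * Complex.I * (((crossProduct k n) i : ℝ) : ℂ)) /
    ((Real.sqrt (2 * (1 - (dotR n k) ^ 2)) : ℝ) : ℂ)

/-- The spin-2 polarization tensors: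
`e⁽⁰⁾ᵢⱼ = √3(k̂ᵢk̂ⱼ − δᵢⱼ/3)`, `e⁽±¹⁾ᵢⱼ = i(k̂ᵢ·ê^±ⱼ + k̂ⱼ·ê^±ᵢ)`,
`e⁽±²⁾ᵢⱼ = √2·ê^±ᵢ·ê^±ⱼ`, labelled by the helicity `h ∈ {−2,−1,0,1,2} ⊆ ℤ`. -/
noncomputable def polTen2 (n k : Fin 3 → ℝ) (h : ℤ) : Fin 3 → Fin 3 → ℂ :=
  if h = 0 then
    fun i j => ((Real.sqrt 3 : ℝ) : ℂ) *
      (((k i : ℝ) : ℂ) * ((k j : ℝ) : ℂ) - if i = j then (1 : ℂ)/3 else 0)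
  else if h = 1 then
    fun i j => Complex.I *
      (((k i : ℝ) : ℂ) * polVec n k 1 j + ((k j : ℝ) : ℂ) * polVec n k 1 i)
  else if h = -1 then
    fun i j => Complex.I *
      (((k i : ℝ) : ℂ) * polVec n k (-1) j + ((k j : ℝ) : ℂ) * polVec n k (-1) i)
  else if h = 2 then
    fun i j => ((Real.sqrt 2 : ℝ) : ℂ) * polVec n k 1 i * polVec n k 1 j
  else if h = -2 then
    fun i j => ((Real.sqrt 2 : ℝ) : ℂ) * polVec n k (-1) i * polVec n k (-1) j
  else 0

/-- The transverse projector `πᵢⱼ = δᵢⱼ − k̂ᵢk̂ⱼ`. -/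
noncomputable def projT (k : Fin 3 → ℝ) (i j : Fin 3) : ℝ :=
  (if i = j then 1 else 0) - k i * k j


theorem keyAux' (n k : Fin 3 → ℝ) (hk : dotR k k = 1) (hn : dotR n n = 1) (i j : Fin 3) :
    (n i - dotR n k * k i) * (n j - dotR n k * k j)
      + crossProduct k n i * crossProduct k n j
      = (1 - (dotR n k)^2) * projT k i j := by
  simp only [dotR, Fin.sum_univ_three, crossProduct, LinearMap.mk₂_apply, projT] at *
  fin_cases i <;> fin_cases j <;> simp only [Fin.isValue, Matrix.cons_val_zero,
    Matrix.cons_val_one, Matrix.head_cons, Matrix.cons_val_two, Matrix.tail_cons, if_true, if_false, Fin.mk_one,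
    show ((⟨2, by omega⟩ : Fin 3)) = 2 from rfl] <;> norm_num [Fin.ext_iff]
  · linear_combination (n 1^2 + n 2^2) * hk + (1 - k 0^2) * hn
  · linear_combination (-(n 0*n 1)) * hk + (-(k 0*k 1)) * hn
  · linear_combination (-(n 0*n 2)) * hk + (-(k 0*k 2)) * hn
  · linear_combination (-(n 0*n 1)) * hk + (-(k 0*k 1)) * hn
  · linear_combination (n 0^2 + n 2^2) * hk + (1 - k 1^2) * hn
  · linear_combination (-(n 1*n 2)) * hk + (-(k 1*k 2)) * hn
  · linear_combination (-(n 0*n 2)) * hk + (-(k 0*k 2)) * hn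
  · linear_combination (-(n 1*n 2)) * hk + (-(k 1*k 2)) * hn
  · linear_combination (1 - n 2^2) * hk + (k 0^2 + k 1^2) * hn

theorem hsumAux' (n k : Fin 3 → ℝ)
    (hk : dotR k k = 1) (hn : dotR n n = 1) (hkn : (dotR n k) ^ 2 ≠ 1)
    (p q : Fin 3) :
    polVec n k 1 p * polVec n (fun l => -k l) 1 q +
      polVec n k (-1) p * polVec n (fun l => -k l) (-1) q
      = ((projT k p q : ℝ) : ℂ) := by
  have hd2 : (dotR n k)^2 < 1 := by
    refine lt_of_le_of_ne ?_ hkn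
    simp only [dotR, Fin.sum_univ_three] at *
    nlinarith [sq_nonneg (n 0*k 1 - n 1*k 0), sq_nonneg (n 0*k 2 - n 2*k 0),
      sq_nonneg (n 1*k 2 - n 2*k 1)]
  have hL : (0:ℝ) < 2 * (1 - (dotR n k)^2) := by nlinarith
  set N := Real.sqrt (2 * (1 - (dotR n k)^2)) with hNdef
  have hN2 : N^2 = 2 * (1 - (dotR n k)^2) := Real.sq_sqrt hL.le
  have hN0 : N ≠ 0 := by positivity
  have hNC : ((N:ℝ):ℂ) ≠ 0 := Complex.ofReal_ne_zero.mpr hN0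
  have dneg : dotR n (fun l => -k l) = -dotR n k := by simp [dotR, Fin.sum_univ_three]
  have crneg : crossProduct (fun l => -k l) n = - crossProduct k n := by
    rw [show (fun l => -k l) = -k from rfl, map_neg, LinearMap.neg_apply]
  have key := keyAux' n k hk hn p q
  simp only [polVec, dneg, crneg, Pi.neg_apply, neg_sq]
  rw [div_mul_div_comm, div_mul_div_comm, ← add_div, div_eq_iff (mul_ne_zero hNC hNC)]
  have keyC : (((n p - dotR n k * k p) * (n q - dotR n k * k q)
      + crossProduct k n p * crossProduct k n q : ℝ) : ℂ)
      = (((1 - (dotR n k)^2) * projT k p q : ℝ) : ℂ) := by exact_mod_cast key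
  have hN2C : ((N:ℝ):ℂ)^2 = ((2 * (1 - (dotR n k)^2) : ℝ) : ℂ) := by exact_mod_cast hN2
  push_cast at keyC hN2C ⊢
  linear_combination (-2 * (crossProduct k n p : ℂ) * (crossProduct k n q)) * Complex.I_sq
    + 2 * keyC + (-(projT k p q : ℂ)) * hN2C

/-- The helicity `±1` polarization sum for a spin-2 field:
`∑_{h∈{+1,−1}} e^{(h)}ᵢⱼ(k̂)·e^{(h)}ₘₙ(−k̂)
  = k̂ᵢk̂ₘπⱼₙ + k̂ⱼk̂ₘπᵢₙ + k̂ᵢk̂ₙπⱼₘ + k̂ⱼk̂ₙπᵢₘ`. -/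
theorem polTen2_sum_helicity_one (n k : Fin 3 → ℝ)
    (hk : dotR k k = 1) (hn : dotR n n = 1) (hkn : (dotR n k) ^ 2 ≠ 1)
    (i j m m' : Fin 3) :
    polTen2 n k 1 i j * polTen2 n (fun l => -k l) 1 m m' +
      polTen2 n k (-1) i j * polTen2 n (fun l => -k l) (-1) m m' =
      ((k i * k m * projT k j m' + k j * k m * projT k i m' +
          k i * k m' * projT k j m + k j * k m' * projT k i m : ℝ) : ℂ) := by
  have hs := hsumAux' n k hk hn hkn
  norm_num [polTen2]
  linear_combination
    (-((((k i : ℝ):ℂ) * polVec n k 1 j + ((k j : ℝ):ℂ) * polVec n k 1 i) *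
        (((k m : ℝ):ℂ) * polVec n (fun l => -k l) 1 m' + ((k m' : ℝ):ℂ) * polVec n (fun l => -k l) 1 m)
      + (((k i : ℝ):ℂ) * polVec n k (-1) j + ((k j : ℝ):ℂ) * polVec n k (-1) i) *
        (((k m : ℝ):ℂ) * polVec n (fun l => -k l) (-1) m' + ((k m' : ℝ):ℂ) * polVec n (fun l => -k l) (-1) m)))
      * Complex.I_sq
    + (((k i : ℝ):ℂ) * ((k m : ℝ):ℂ)) * hs j m'
    + (((k j : ℝ):ℂ) * ((k m : ℝ):ℂ)) * hs i m'
    + (((k i : ℝ):ℂ) * ((k m' : ℝ):ℂ)) * hs j m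
    + (((k j : ℝ):ℂ) * ((k m' : ℝ):ℂ)) * hs i m
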